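/- Let u be a continuous fuzzy number (a continuous function u : ℝ → [0,1] that is quasi-concave, attains value 1, and vanishes outside a compact interval) with supp(u) = [a,b] and core(u) = [c,d], a ≤ c < d ≤ b. Define Ũ_n^{(M)}(u) to be 0 outside [a,b] and U_n^{(M)}(u;[a,b]) on [a,b]. Then for n with (b−a)/n < d−c, Ũ_n^{(M)}(u) attains the value 1, i.e., there exists α ∈ [a,b] with Ũ_n^{(M)}(u)(α) = 1. -/

import Mathlib

open Finset Set

/-- Basis functions of the truncated Baskakov operator on `[0,1]`:
`b_{n,k}(x) = C(n+k-1,k) x^k (1+x)^{-(n+k)}`. -/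
noncomputable def bk (n k : ℕ) (x : ℝ) : ℝ :=
  (Nat.choose (n + k - 1) k : ℝ) * x ^ k / (1 + x) ^ (n + k)

/-- Max-product truncated Baskakov operator on `[0,1]`. -/
noncomputable def UM (n : ℕ) (f : ℝ → ℝ) (x : ℝ) : ℝ :=
  ((range (n + 1)).sup' nonempty_range_add_one fun k => bk n k x * f ((k : ℝ) / n)) /
  ((range (n + 1)).sup' nonempty_range_add_one fun k => bk n k x)

/-- Basis functions on a general compact interval `[a,b]`. -/
noncomputable def bkab (a b : ℝ) (n k : ℕ) (x : ℝ) : ℝ :=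
  (Nat.choose (n + k - 1) k : ℝ) * ((x - a) / (b - a)) ^ k /
    ((b - 2 * a + x) / (b - a)) ^ (n + k)

/-- Max-product truncated Baskakov operator on `[a,b]`. -/
noncomputable def UMab (a b : ℝ) (n : ℕ) (f : ℝ → ℝ) (x : ℝ) : ℝ :=
  ((range (n + 1)).sup' nonempty_range_add_one fun k =>
      bkab a b n k x * f (a + (b - a) * k / n)) /
  ((range (n + 1)).sup' nonempty_range_add_one fun k => bkab a b n k x)

/-- Modulus of continuity `ω₁(f;δ)` of `f` on a set `s`. -/
noncomputable def omega1 (f : ℝ → ℝ) (s : Set ℝ) (δ : ℝ) : ℝ :=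
  sSup {d | ∃ x ∈ s, ∃ y ∈ s, |x - y| ≤ δ ∧ d = |f x - f y|}


lemma bk_nonneg (n k : ℕ) {t : ℝ} (ht : 0 ≤ t) : 0 ≤ bk n k t := by
  unfold bk; positivity

lemma bk_pos (n k : ℕ) (hn : 1 ≤ n) {t : ℝ} (ht : 0 < t) : 0 < bk n k t := by
  unfold bk
  have hc : 0 < (Nat.choose (n + k - 1) k : ℝ) := by
    exact_mod_cast Nat.choose_pos (by omega)
  positivity

lemma bk_step (n k : ℕ) (hn : 1 ≤ n) (t : ℝ) :
    ((k:ℝ)+1) * (1+t) * bk n (k+1) t = ((n:ℝ)+(k:ℝ)) * t * bk n k t := by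
  unfold bk
  have h1 : n + (k+1) - 1 = n + k := by omega
  have h2 : (n+k) * Nat.choose (n+k-1) k = Nat.choose (n+k) (k+1) * (k+1) := by
    have h := Nat.add_one_mul_choose_eq (n+k-1) k
    have e : n+k-1+1 = n+k := by omega
    rwa [e] at h
  have hc : ((n:ℝ)+(k:ℝ)) * (Nat.choose (n+k-1) k : ℝ)
      = (Nat.choose (n+k) (k+1) : ℝ) * ((k:ℝ)+1) := by
    exact_mod_cast congrArg (fun m : ℕ => (m : ℝ)) h2
  rw [h1]
  by_cases h : (1:ℝ) + t = 0
  · rw [h]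
    simp [zero_pow (by omega : n + k ≠ 0), zero_pow (by omega : n + (k+1) ≠ 0)]
  · rw [show n + (k+1) = (n+k)+1 from rfl, pow_succ (1+t)]
    field_simp
    linear_combination (-(t^(k+1))) * hc

lemma bk_le_succ (n k : ℕ) (hn : 1 ≤ n) {t : ℝ} (ht : 0 ≤ t)
    (h : ((k:ℝ)+1)*(1+t) ≤ ((n:ℝ)+(k:ℝ))*t) : bk n k t ≤ bk n (k+1) t := by
  have hs := bk_step n k hn t
  have hA : (0:ℝ) < ((k:ℝ)+1)*(1+t) := by positivity
  have hb := bk_nonneg n k ht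
  have h1 : ((k:ℝ)+1)*(1+t) * bk n k t ≤ ((k:ℝ)+1)*(1+t) * bk n (k+1) t := by
    nlinarith [mul_le_mul_of_nonneg_right h hb]
  exact le_of_mul_le_mul_left h1 hA

lemma bk_succ_le (n k : ℕ) (hn : 1 ≤ n) {t : ℝ} (ht : 0 ≤ t)
    (h : ((n:ℝ)+(k:ℝ))*t ≤ ((k:ℝ)+1)*(1+t)) : bk n (k+1) t ≤ bk n k t := by
  have hs := bk_step n k hn t
  have hA : (0:ℝ) < ((k:ℝ)+1)*(1+t) := by positivity
  have hb := bk_nonneg n k ht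
  have h1 : ((k:ℝ)+1)*(1+t) * bk n (k+1) t ≤ ((k:ℝ)+1)*(1+t) * bk n k t := by
    nlinarith [mul_le_mul_of_nonneg_right h hb]
  exact le_of_mul_le_mul_left h1 hA

lemma chain_up (g : ℕ → ℝ) :
    ∀ j : ℕ, (∀ k, k + 1 ≤ j → g k ≤ g (k+1)) → ∀ k, k ≤ j → g k ≤ g j := by
  intro j
  induction j with
  | zero => intro _ k hk; have : k = 0 := Nat.le_zero.mp hk; simp [this]
  | succ m ih =>
    intro h k hk
    rcases eq_or_lt_of_le hk with h1 | h1
    · rw [h1]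
    · exact (ih (fun k hk' => h k (by omega)) k (by omega)).trans (h m (by omega))

lemma chain_down (g : ℕ → ℝ) (j : ℕ) (h : ∀ k, j ≤ k → g (k+1) ≤ g k) :
    ∀ k, j ≤ k → g k ≤ g j := by
  intro k
  induction k with
  | zero => intro hk; have : j = 0 := Nat.le_zero.mp hk; simp [this]
  | succ m ih =>
    intro hk
    rcases eq_or_lt_of_le hk with h1 | h1
    · rw [← h1]
    · exact (h m (by omega)).trans (ih (by omega))

/-- At `t = j/(n-1)`, the basis function `bk n j` dominates all others. -/
lemma bk_le_peak (n j : ℕ) (hn : 2 ≤ n) (hj1 : 1 ≤ j) (hjn : (j:ℝ) ≤ (n:ℝ) - 1) :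
    ∀ k, bk n k ((j:ℝ)/((n:ℝ)-1)) ≤ bk n j ((j:ℝ)/((n:ℝ)-1)) := by
  set t : ℝ := (j:ℝ)/((n:ℝ)-1) with ht_def
  have hN : (0:ℝ) < (n:ℝ) - 1 := by
    have : (2:ℝ) ≤ (n:ℝ) := by exact_mod_cast hn
    linarith
  have ht0 : 0 < t := by
    apply div_pos _ hN; exact_mod_cast Nat.lt_of_lt_of_le Nat.zero_lt_one hj1
  have ht : 0 ≤ t := le_of_lt ht0
  have hone : 1 + t = ((n:ℝ) - 1 + (j:ℝ))/((n:ℝ)-1) := by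
    rw [ht_def, add_div, div_self (ne_of_gt hN)]
  intro k
  rcases le_or_gt k j with hk | hk
  · refine chain_up (fun k => bk n k t) j ?_ k hk
    intro k hkj
    apply bk_le_succ n k (by omega) ht
    have hkj' : (k:ℝ) + 1 ≤ (j:ℝ) := by exact_mod_cast hkj
    rw [hone, ht_def, ← mul_div_assoc, ← mul_div_assoc, div_le_div_iff₀ hN hN]
    nlinarith [mul_nonneg (mul_nonneg hN.le hN.le) (by linarith : (0:ℝ) ≤ (j:ℝ) - (k:ℝ) - 1)]
  · refine chain_down (fun k => bk n k t) j ?_ k (le_of_lt hk)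
    intro k hkj
    apply bk_succ_le n k (by omega) ht
    have hkj' : (j:ℝ) ≤ (k:ℝ) := by exact_mod_cast hkj
    rw [hone, ht_def, ← mul_div_assoc, ← mul_div_assoc, div_le_div_iff₀ hN hN]
    nlinarith [mul_nonneg (mul_nonneg hN.le hN.le) (by linarith : (0:ℝ) ≤ (k:ℝ) + 1 - (j:ℝ))]

theorem fuzzy_UM_attains_one (u : ℝ → ℝ) (hu01 : ∀ x, u x ∈ Set.Icc (0 : ℝ) 1)
    (hcont : Continuous u)
    (hqc : QuasiconcaveOn ℝ Set.univ u)
    (a b c d : ℝ) (hac : a ≤ c) (hcd : c < d) (hdb : d ≤ b)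
    (hsupp : closure {x : ℝ | 0 < u x} = Set.Icc a b)
    (hcore : {x : ℝ | u x = 1} = Set.Icc c d)
    (n : ℕ) (hn : 2 ≤ n) (hlarge : (b - a) / (n : ℝ) < d - c) :
    ∃ α ∈ Set.Icc a b,
      (fun x => if x ∈ Set.Icc a b then UMab a b n u x else 0) α = 1 := by
  have hb : (0:ℝ) < b - a := by linarith
  have hn2 : (2:ℝ) ≤ (n:ℝ) := by exact_mod_cast hn
  have hnpos : (0:ℝ) < (n:ℝ) := by linarith
  have hN : (0:ℝ) < (n:ℝ) - 1 := by linarith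
  -- choice of node index j
  set r : ℝ := (n:ℝ) * (c - a) / (b - a) with hr_def
  have hr0 : 0 ≤ r := by
    apply div_nonneg _ (le_of_lt hb); nlinarith
  set j : ℕ := ⌊r⌋₊ + 1 with hj_def
  have hj1 : 1 ≤ j := Nat.le_add_left 1 _
  have hjr : r < (j:ℝ) := by
    push_cast [hj_def]; exact Nat.lt_floor_add_one r
  have hjr' : (j:ℝ) ≤ r + 1 := by
    push_cast [hj_def]
    have := Nat.floor_le hr0
    linarith
  have hrb : r * (b - a) = (n:ℝ) * (c - a) := div_mul_cancel₀ _ (ne_of_gt hb)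
  have hlarge' : b - a < (d - c) * (n:ℝ) := (div_lt_iff₀ hnpos).mp hlarge
  -- j * (b-a) bounds
  have hlow : (n:ℝ) * (c - a) < (j:ℝ) * (b - a) := by nlinarith
  have hhigh : (j:ℝ) * (b - a) < (d - a) * (n:ℝ) := by nlinarith
  have hjn : (j:ℝ) ≤ (n:ℝ) - 1 := by
    have hjltn : (j:ℝ) < (n:ℝ) := by nlinarith
    have : j < n := by exact_mod_cast hjltn
    have : j + 1 ≤ n := this
    have : ((j:ℝ)) + 1 ≤ (n:ℝ) := by exact_mod_cast this
    linarith
  -- the node is in the core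
  have hnode : u (a + (b - a) * (j:ℝ) / (n:ℝ)) = 1 := by
    have hmem : a + (b - a) * (j:ℝ) / (n:ℝ) ∈ Set.Icc c d := by
      constructor
      · have : (c - a) * (n:ℝ) ≤ (b - a) * (j:ℝ) := by nlinarith
        have h2 : c - a ≤ (b - a) * (j:ℝ) / (n:ℝ) := (le_div_iff₀ hnpos).mpr this
        linarith
      · have : (b - a) * (j:ℝ) ≤ (d - a) * (n:ℝ) := by nlinarith
        have h2 : (b - a) * (j:ℝ) / (n:ℝ) ≤ d - a := (div_le_iff₀ hnpos).mpr this
        linarith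
    have := Set.ext_iff.mp hcore (a + (b - a) * (j:ℝ) / (n:ℝ))
    exact this.mpr hmem
  -- the evaluation point
  set t : ℝ := (j:ℝ) / ((n:ℝ) - 1) with ht_def
  have ht0 : 0 < t := by
    apply div_pos _ hN; exact_mod_cast hj1
  have ht1 : t ≤ 1 := by
    rw [ht_def, div_le_one hN]; exact hjn
  set α : ℝ := a + (b - a) * t with hα_def
  have hαmem : α ∈ Set.Icc a b := by
    constructor
    · nlinarith
    · nlinarith
  refine ⟨α, hαmem, ?_⟩
  simp only [if_pos hαmem]
  -- bkab at α equals bk at t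
  have hbkab : ∀ k, bkab a b n k α = bk n k t := by
    intro k
    unfold bkab bk
    have e1 : (α - a) / (b - a) = t := by
      rw [hα_def]; field_simp; ring
    have e2 : (b - 2 * a + α) / (b - a) = 1 + t := by
      rw [hα_def]; field_simp; ring
    rw [e1, e2]
  have hpeak := bk_le_peak n j hn hj1 hjn
  have hjmem : j ∈ range (n + 1) := by
    rw [Finset.mem_range]
    have : (j:ℝ) < (n:ℝ) + 1 := by linarith
    exact_mod_cast this
  have hden : ((range (n + 1)).sup' nonempty_range_add_one fun k => bkab a b n k α)
      = bk n j t := by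
    apply le_antisymm
    · apply Finset.sup'_le
      intro k _
      rw [hbkab k]; exact hpeak k
    · have := Finset.le_sup' (fun k => bkab a b n k α) hjmem
      rwa [hbkab j] at this
  have hnum : ((range (n + 1)).sup' nonempty_range_add_one fun k =>
      bkab a b n k α * u (a + (b - a) * (k:ℝ) / (n:ℝ))) = bk n j t := by
    apply le_antisymm
    · apply Finset.sup'_le
      intro k _
      rw [hbkab k]
      calc bk n k t * u (a + (b - a) * (k:ℝ) / (n:ℝ))
          ≤ bk n k t * 1 := by
            apply mul_le_mul_of_nonneg_left (hu01 _).2 (bk_nonneg n k (le_of_lt ht0))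
        _ = bk n k t := mul_one _
        _ ≤ bk n j t := hpeak k
    · have := Finset.le_sup'
        (fun k => bkab a b n k α * u (a + (b - a) * (k:ℝ) / (n:ℝ))) hjmem
      rwa [hbkab j, hnode, mul_one] at this
  unfold UMab
  rw [hden, hnum]
  exact div_self (ne_of_gt (bk_pos n j (by omega) ht0))
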